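/- Let E be a real Banach space, α ∈ (0,1), B(α) = 1 − α + α/Γ(α), let g : E → E be Lipschitz continuous with constant C ≥ 0, let φ_c ∈ E, and let T₁ > 0. Define ψ on the space C([0,T₁]; E) of continuous E-valued functions with the supremum norm by ψ(φ)(t) = φ_c + ((1−α)/B(α)) g(φ(t)) + (α/(B(α)Γ(α))) ∫_0^t (t−s)^{α−1} g(φ(s)) ds. Then ψ maps C([0,T₁]; E) into itself and is Lipschitz continuous with constant C · ( (1−α)/B(α) + T₁^α/(B(α)Γ(α)) ); in particular, if C · ( (1−α)/B(α) + T₁^α/(B(α)Γ(α)) ) < 1, then ψ is a contraction. -/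

import Mathlib

open Set MeasureTheory intervalIntegral


lemma kernel_intInt {E : Type*} [NormedAddCommGroup E] [NormedSpace ℝ E]
    {α t T₁ : ℝ} (hα0 : 0 < α) (ht0 : 0 ≤ t) (htT : t ≤ T₁)
    {h : ℝ → E} (hh : ContinuousOn h (Set.Icc 0 T₁))
    {M : ℝ} (hM : ∀ s ∈ Set.Icc (0:ℝ) T₁, ‖h s‖ ≤ M) :
    IntervalIntegrable (fun s => (t - s) ^ (α - 1) • h s) volume 0 t := by
  have hsub : Set.Ioc (0:ℝ) t ⊆ Set.Icc 0 T₁ := fun s hs => ⟨le_of_lt hs.1, hs.2.trans htT⟩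
  have hker : IntervalIntegrable (fun s => (t - s) ^ (α - 1)) volume 0 t := by
    have := (intervalIntegrable_rpow' (a := 0) (b := t) (r := α - 1) (by linarith)).comp_sub_left t
    simpa using this.symm
  apply IntervalIntegrable.mono_fun' (g := fun s => M * (t - s) ^ (α - 1)) (hker.const_mul M)
  · apply AEStronglyMeasurable.smul
    · have := hker.1.aestronglyMeasurable
      rwa [Set.uIoc_of_le ht0]
    · rw [Set.uIoc_of_le ht0]
      exact (hh.mono hsub).aestronglyMeasurable measurableSet_Ioc
  · rw [Set.uIoc_of_le ht0]
    filter_upwards [ae_restrict_mem measurableSet_Ioc] with s hs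
    have h1 : (0:ℝ) ≤ (t - s) ^ (α - 1) := Real.rpow_nonneg (by linarith [hs.2]) _
    rw [norm_smul, Real.norm_eq_abs, abs_of_nonneg h1, mul_comm]
    exact mul_le_mul_of_nonneg_right (hM s (hsub hs)) h1

lemma kernel_integral_contOn {E : Type*} [NormedAddCommGroup E] [NormedSpace ℝ E]
    [CompleteSpace E]
    {α T₁ : ℝ} (hα0 : 0 < α) (hα1 : α < 1) (hT₁ : 0 < T₁)
    {h : ℝ → E} (hh : Continuous h) {M : ℝ} (hM : ∀ x, ‖h x‖ ≤ M) :
    ContinuousOn (fun t => ∫ s in (0:ℝ)..t, (t - s) ^ (α - 1) • h s) (Set.Icc 0 T₁) := by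
  set F : ℝ → ℝ → E := fun t u => (Set.Ioc 0 t).indicator (fun u => u ^ (α - 1) • h (t - u)) u
    with hF
  have hM0 : 0 ≤ M := le_trans (norm_nonneg _) (hM 0)
  have hkey : ∀ t ∈ Set.Icc (0:ℝ) T₁,
      (∫ u in Set.Ioc (0:ℝ) T₁, F t u) = ∫ s in (0:ℝ)..t, (t - s) ^ (α - 1) • h s := by
    intro t ht
    have h1 : ∫ s in (0:ℝ)..t, (t - s) ^ (α - 1) • h s
        = ∫ u in (0:ℝ)..t, u ^ (α - 1) • h (t - u) := by
      have := integral_comp_sub_left (a := 0) (b := t) (fun u => u ^ (α - 1) • h (t - u)) t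
      simp only [sub_sub_cancel, sub_zero, sub_self] at this
      exact this
    rw [h1, intervalIntegral.integral_of_le ht.1, hF,
      MeasureTheory.setIntegral_indicator measurableSet_Ioc,
      Set.inter_eq_self_of_subset_right (Set.Ioc_subset_Ioc_right ht.2)]
  refine ContinuousOn.congr (f := fun t => ∫ u in Set.Ioc (0:ℝ) T₁, F t u) ?_
    (fun t ht => (hkey t ht).symm)
  intro t₀ ht₀
  have hrpm : AEStronglyMeasurable (fun u : ℝ => u ^ (α - 1))
      (volume.restrict (Set.Ioc 0 T₁)) :=
    (intervalIntegrable_rpow' (a := 0) (b := T₁) (r := α - 1)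
      (by linarith)).1.aestronglyMeasurable
  apply MeasureTheory.continuousWithinAt_of_dominated (bound := fun u => M * u ^ (α - 1))
  · refine Filter.Eventually.of_forall (fun t => ?_)
    exact (hrpm.smul ((hh.comp (continuous_const.sub continuous_id)).aestronglyMeasurable)).indicator
      measurableSet_Ioc
  · refine Filter.Eventually.of_forall (fun t => ?_)
    filter_upwards [ae_restrict_mem measurableSet_Ioc] with u hu
    have hu0 : (0:ℝ) ≤ u ^ (α - 1) := Real.rpow_nonneg hu.1.le _
    by_cases hut : u ∈ Set.Ioc 0 t
    · simp only [hF, Set.indicator_of_mem hut]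
      rw [norm_smul, Real.norm_eq_abs, abs_of_nonneg hu0, mul_comm]
      exact mul_le_mul_of_nonneg_right (hM _) hu0
    · simp only [hF, Set.indicator_of_notMem hut, norm_zero]
      positivity
  · rw [← MeasureTheory.IntegrableOn]
    rw [← intervalIntegrable_iff_integrableOn_Ioc_of_le hT₁.le]
    exact (intervalIntegrable_rpow' (by linarith)).const_mul M
  · have h0 : ∀ᵐ u : ℝ ∂(volume.restrict (Set.Ioc 0 T₁)), u ≠ t₀ := by
      refine ae_restrict_of_ae ?_
      rw [ae_iff]
      simp only [ne_eq, not_not, Set.setOf_eq_eq_singleton]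
      exact measure_singleton t₀
    filter_upwards [ae_restrict_mem measurableSet_Ioc, h0] with u hu hne
    rcases lt_or_gt_of_ne hne with hlt | hgt
    · have hcont : ContinuousWithinAt (fun t => u ^ (α - 1) • h (t - u))
          (Set.Icc 0 T₁) t₀ :=
        (continuous_const.smul (hh.comp (continuous_id.sub continuous_const))).continuousWithinAt
      refine hcont.congr_of_eventuallyEq ?_ ?_
      · filter_upwards [eventually_nhdsWithin_of_eventually_nhds (eventually_gt_nhds hlt)]
          with t htu
        simp only [hF]
        exact Set.indicator_of_mem (Set.mem_Ioc.mpr ⟨hu.1, htu.le⟩) _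
      · simp only [hF]
        exact Set.indicator_of_mem (Set.mem_Ioc.mpr ⟨hu.1, hlt.le⟩) _
    · refine (continuousWithinAt_const (b := (0:E))).congr_of_eventuallyEq ?_ ?_
      · filter_upwards [eventually_nhdsWithin_of_eventually_nhds (eventually_lt_nhds hgt)]
          with t htu
        simp only [hF]
        exact Set.indicator_of_notMem (fun hmem => absurd hmem.2 (not_le.mpr htu)) _
      · simp only [hF]
        exact Set.indicator_of_notMem (fun hmem => absurd hmem.2 (not_le.mpr hgt)) _


/-- The Picard-type operator
`ψ(φ)(t) = φ_c + ((1−α)/B(α)) g(φ(t)) + (α/(B(α)Γ(α))) ∫_0^t (t−s)^{α−1} g(φ(s)) ds`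
maps `C([0,T₁]; E)` into itself and is Lipschitz, in the supremum norm, with
constant `C((1−α)/B(α) + T₁^α/(B(α)Γ(α)))`; in particular it is a contraction
when this constant is `< 1`. -/
theorem ab_picard_operator_lipschitz
    {E : Type*} [NormedAddCommGroup E] [NormedSpace ℝ E] [CompleteSpace E]
    (α : ℝ) (hα : α ∈ Set.Ioo (0 : ℝ) 1)
    (B : ℝ) (hB : B = 1 - α + α / Real.Gamma α)
    (g : E → E) (C : ℝ) (hC : 0 ≤ C)
    (hg : ∀ x y : E, ‖g x - g y‖ ≤ C * ‖x - y‖)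
    (φc : E) (T₁ : ℝ) (hT₁ : 0 < T₁)
    (ψ : (ℝ → E) → (ℝ → E))
    (hψ : ∀ (φ : ℝ → E) (t : ℝ),
      ψ φ t = φc + ((1 - α) / B) • g (φ t)
        + (α / (B * Real.Gamma α)) • ∫ s in (0 : ℝ)..t, (t - s) ^ (α - 1) • g (φ s)) :
    (∀ φ : ℝ → E, ContinuousOn φ (Set.Icc 0 T₁) → ContinuousOn (ψ φ) (Set.Icc 0 T₁)) ∧
      (∀ φ₁ φ₂ : ℝ → E, ContinuousOn φ₁ (Set.Icc 0 T₁) → ContinuousOn φ₂ (Set.Icc 0 T₁) →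
        ∀ t ∈ Set.Icc (0 : ℝ) T₁,
          ‖ψ φ₁ t - ψ φ₂ t‖
            ≤ C * ((1 - α) / B + T₁ ^ α / (B * Real.Gamma α)) *
                sSup ((fun s => ‖φ₁ s - φ₂ s‖) '' Set.Icc (0 : ℝ) T₁)) := by
  obtain ⟨hα0, hα1⟩ := hα
  have hΓ : 0 < Real.Gamma α := Real.Gamma_pos_of_pos hα0
  have hB0 : 0 < B := by
    rw [hB]
    have : 0 < α / Real.Gamma α := div_pos hα0 hΓ
    linarith
  have hBΓ : 0 < B * Real.Gamma α := mul_pos hB0 hΓ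
  have hc1 : 0 ≤ (1 - α) / B := div_nonneg (by linarith) hB0.le
  have hc2 : 0 ≤ α / (B * Real.Gamma α) := div_nonneg hα0.le hBΓ.le
  have hgc : Continuous g := by
    have : LipschitzWith (Real.toNNReal C) g := by
      refine LipschitzWith.of_dist_le_mul (fun x y => ?_)
      rw [dist_eq_norm, dist_eq_norm, Real.coe_toNNReal C hC]
      exact hg x y
    exact this.continuous
  -- the key interval-integral value for the kernel
  have hkint : ∀ t : ℝ, 0 ≤ t → (∫ s in (0:ℝ)..t, (t - s) ^ (α - 1)) = t ^ α / α := by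
    intro t ht
    have h1 : ∫ s in (0:ℝ)..t, (t - s) ^ (α - 1) = ∫ u in (0:ℝ)..t, u ^ (α - 1) := by
      have := integral_comp_sub_left (a := 0) (b := t) (fun u => u ^ (α - 1)) t
      simp only [sub_zero, sub_self] at this
      exact this
    rw [h1, integral_rpow (Or.inl (by linarith))]
    rw [sub_add_cancel, Real.zero_rpow hα0.ne', sub_zero]
  constructor
  · -- continuity part
    intro φ hφ
    -- extend g ∘ φ continuously to all of ℝ
    set f : Set.Icc (0:ℝ) T₁ → E := Set.restrict (Set.Icc 0 T₁) (fun s => g (φ s)) with hfdef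
    have hfc : Continuous f := ContinuousOn.restrict (hgc.comp_continuousOn hφ)
    set h' : ℝ → E := Set.IccExtend hT₁.le f with hh'def
    have hh'c : Continuous h' := hfc.Icc_extend'
    obtain ⟨M, hM⟩ := (isCompact_Icc (a := (0:ℝ)) (b := T₁)).exists_bound_of_continuousOn
      (hgc.comp_continuousOn hφ)
    have hM' : ∀ x : ℝ, ‖h' x‖ ≤ M := by
      intro x
      rw [hh'def, Set.IccExtend_apply hT₁.le]
      exact hM _ (Set.projIcc 0 T₁ hT₁.le x).2
    have heq : ∀ t ∈ Set.Icc (0:ℝ) T₁, ∀ s ∈ Set.Icc (0:ℝ) t, h' s = g (φ s) := by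
      intro t ht s hs
      have hsmem : s ∈ Set.Icc (0:ℝ) T₁ := ⟨hs.1, hs.2.trans ht.2⟩
      rw [hh'def, Set.IccExtend_of_mem _ _ hsmem]
      rfl
    have hcont := kernel_integral_contOn (E := E) hα0 hα1 hT₁ hh'c hM'
    have hmain : ContinuousOn (fun t => φc + ((1 - α) / B) • g (φ t)
        + (α / (B * Real.Gamma α)) • ∫ s in (0 : ℝ)..t, (t - s) ^ (α - 1) • g (φ s))
        (Set.Icc 0 T₁) := by
      refine (continuousOn_const.add
        (continuousOn_const.smul (hgc.comp_continuousOn hφ))).add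
        (ContinuousOn.smul continuousOn_const ?_)
      refine hcont.congr (fun t ht => ?_)
      refine intervalIntegral.integral_congr (fun s hs => ?_)
      rw [Set.uIcc_of_le ht.1] at hs
      rw [heq t ht s hs]
    exact hmain.congr (fun t _ => hψ φ t)
  · -- Lipschitz part
    intro φ₁ φ₂ hφ₁ hφ₂ t ht
    set Msup := sSup ((fun s => ‖φ₁ s - φ₂ s‖) '' Set.Icc (0:ℝ) T₁) with hMsup
    have hbdd : BddAbove ((fun s => ‖φ₁ s - φ₂ s‖) '' Set.Icc (0:ℝ) T₁) :=
      isCompact_Icc.bddAbove_image ((hφ₁.sub hφ₂).norm)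
    have hMle : ∀ s ∈ Set.Icc (0:ℝ) T₁, ‖φ₁ s - φ₂ s‖ ≤ Msup :=
      fun s hs => le_csSup hbdd ⟨s, hs, rfl⟩
    have hMsup0 : 0 ≤ Msup :=
      le_trans (norm_nonneg _) (hMle 0 ⟨le_refl 0, hT₁.le⟩)
    obtain ⟨M₁, hM₁⟩ := (isCompact_Icc (a := (0:ℝ)) (b := T₁)).exists_bound_of_continuousOn
      (hgc.comp_continuousOn hφ₁)
    obtain ⟨M₂, hM₂⟩ := (isCompact_Icc (a := (0:ℝ)) (b := T₁)).exists_bound_of_continuousOn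
      (hgc.comp_continuousOn hφ₂)
    have int1 : IntervalIntegrable (fun s => (t - s) ^ (α - 1) • g (φ₁ s)) volume 0 t :=
      kernel_intInt hα0 ht.1 ht.2 (hgc.comp_continuousOn hφ₁) hM₁
    have int2 : IntervalIntegrable (fun s => (t - s) ^ (α - 1) • g (φ₂ s)) volume 0 t :=
      kernel_intInt hα0 ht.1 ht.2 (hgc.comp_continuousOn hφ₂) hM₂
    have hker : IntervalIntegrable (fun s => (t - s) ^ (α - 1)) volume 0 t := by
      have := (intervalIntegrable_rpow' (a := 0) (b := t) (r := α - 1)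
        (by linarith)).comp_sub_left t
      simpa using this.symm
    have hI : (∫ s in (0:ℝ)..t, (t - s) ^ (α - 1) • (g (φ₁ s) - g (φ₂ s)))
        = (∫ s in (0:ℝ)..t, (t - s) ^ (α - 1) • g (φ₁ s))
          - ∫ s in (0:ℝ)..t, (t - s) ^ (α - 1) • g (φ₂ s) := by
      rw [← intervalIntegral.integral_sub int1 int2]
      simp [smul_sub]
    have hdiff : ψ φ₁ t - ψ φ₂ t
        = ((1 - α) / B) • (g (φ₁ t) - g (φ₂ t))
          + (α / (B * Real.Gamma α)) •
            ∫ s in (0:ℝ)..t, (t - s) ^ (α - 1) • (g (φ₁ s) - g (φ₂ s)) := by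
      rw [hψ φ₁ t, hψ φ₂ t, hI, smul_sub, smul_sub]
      abel
    have hX : ‖g (φ₁ t) - g (φ₂ t)‖ ≤ C * Msup :=
      le_trans (hg _ _) (mul_le_mul_of_nonneg_left (hMle t ht) hC)
    have hY : ‖∫ s in (0:ℝ)..t, (t - s) ^ (α - 1) • (g (φ₁ s) - g (φ₂ s))‖
        ≤ C * Msup * (t ^ α / α) := by
      have hb : ∀ᵐ s ∂(volume.restrict (Set.uIoc 0 t)),
          ‖(t - s) ^ (α - 1) • (g (φ₁ s) - g (φ₂ s))‖ ≤ C * Msup * (t - s) ^ (α - 1) := by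
        rw [Set.uIoc_of_le ht.1]
        filter_upwards [ae_restrict_mem measurableSet_Ioc] with s hs
        have h0 : (0:ℝ) ≤ (t - s) ^ (α - 1) := Real.rpow_nonneg (by linarith [hs.2]) _
        rw [norm_smul, Real.norm_eq_abs, abs_of_nonneg h0, mul_comm (C * Msup)]
        refine mul_le_mul_of_nonneg_left ?_ h0
        exact le_trans (hg _ _)
          (mul_le_mul_of_nonneg_left (hMle s ⟨hs.1.le, hs.2.trans ht.2⟩) hC)
      have := intervalIntegral.norm_integral_le_abs_of_norm_le hb (hker.const_mul (C * Msup))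
      rw [intervalIntegral.integral_const_mul, hkint t ht.1] at this
      refine le_trans this (le_of_eq (abs_of_nonneg ?_))
      exact mul_nonneg (mul_nonneg hC hMsup0) (div_nonneg (Real.rpow_nonneg ht.1 _) hα0.le)
    have htα : t ^ α ≤ T₁ ^ α := Real.rpow_le_rpow ht.1 ht.2 hα0.le
    calc ‖ψ φ₁ t - ψ φ₂ t‖
        ≤ ((1 - α) / B) * ‖g (φ₁ t) - g (φ₂ t)‖
          + (α / (B * Real.Gamma α)) *
            ‖∫ s in (0:ℝ)..t, (t - s) ^ (α - 1) • (g (φ₁ s) - g (φ₂ s))‖ := by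
          rw [hdiff]
          refine le_trans (norm_add_le _ _) ?_
          rw [norm_smul, norm_smul, Real.norm_eq_abs, Real.norm_eq_abs,
            abs_of_nonneg hc1, abs_of_nonneg hc2]
      _ ≤ ((1 - α) / B) * (C * Msup)
          + (α / (B * Real.Gamma α)) * (C * Msup * (t ^ α / α)) := by
          exact add_le_add (mul_le_mul_of_nonneg_left hX hc1)
            (mul_le_mul_of_nonneg_left hY hc2)
      _ ≤ C * ((1 - α) / B + T₁ ^ α / (B * Real.Gamma α)) * Msup := by
          have he : (α / (B * Real.Gamma α)) * (C * Msup * (t ^ α / α))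
              = C * Msup * (t ^ α / (B * Real.Gamma α)) := by
            field_simp
          rw [he]
          have h1 : C * Msup * (t ^ α / (B * Real.Gamma α))
              ≤ C * Msup * (T₁ ^ α / (B * Real.Gamma α)) := by
            refine mul_le_mul_of_nonneg_left ?_ (mul_nonneg hC hMsup0)
            gcongr
          nlinarith [mul_nonneg hC hMsup0]
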